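/- Let D be a digraph of order n ≥ 6 with minimum out-degree and minimum in-degree both at least two, satisfying condition (*). Let C := x_1x_2…x_{n-1}x_1 be a cycle of length n−1 in D (subscripts modulo n−1), and let y be the vertex not on C. If for some i ∈ [1,n−1] both arcs x_iy and yx_i are in D, then D contains a Hamiltonian bypass. -/

import Mathlib

open Finset

variable {V : Type*}

/-- Out-degree of a vertex. -/
def outDeg [Fintype V] (A : V → V → Prop) [DecidableRel A] (v : V) : ℕ :=
  (Finset.univ.filter (fun u => A v u)).card

/-- In-degree of a vertex. -/
def inDeg [Fintype V] (A : V → V → Prop) [DecidableRel A] (v : V) : ℕ :=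
  (Finset.univ.filter (fun u => A u v)).card

/-- Degree of a vertex: out-degree plus in-degree. -/
def deg [Fintype V] (A : V → V → Prop) [DecidableRel A] (v : V) : ℕ :=
  outDeg A v + inDeg A v

/-- Two vertices are adjacent if there is an arc between them in some direction. -/
def Adj (A : V → V → Prop) (u v : V) : Prop := A u v ∨ A v u

/-- Condition (*): for every pair of non-adjacent vertices with a common in-neighbour,
`min {d(x), d(y)} ≥ n - 1` and `d(x) + d(y) ≥ 2n - 1`. -/
def CondStar [Fintype V] (A : V → V → Prop) [DecidableRel A] : Prop :=
  ∀ x y : V, x ≠ y → ¬ Adj A x y → (∃ z : V, A z x ∧ A z y) →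
    min (deg A x) (deg A y) ≥ Fintype.card V - 1 ∧
    deg A x + deg A y ≥ 2 * Fintype.card V - 1

/-- A Hamiltonian bypass: an ordering `x₁, …, xₙ` of all vertices such that
`x₁x₂, …, x_{n-1}xₙ` and `x₁xₙ` are all arcs. -/
def HamBypass (A : V → V → Prop) : Prop :=
  ∃ l : List V, l.Nodup ∧ (∀ v : V, v ∈ l) ∧ l.Chain' A ∧
    ∃ a b : V, l.head? = some a ∧ l.getLast? = some b ∧ A a b

section Helpers

variable [Fintype V] [DecidableEq V] {A : V → V → Prop}

private lemma castinj {m s t : ℕ} (hs : s < m) (ht : t < m)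
    (h : (s : ZMod m) = t) : s = t := by
  have := congrArg ZMod.val h
  rwa [ZMod.val_natCast_of_lt hs, ZMod.val_natCast_of_lt ht] at this

private lemma cover_all {m : ℕ} (hm : 1 ≤ m) (hc : Fintype.card V = m + 1)
    (x : ZMod m → V) (hinj : Function.Injective x) (y : V) (hy : ∀ j, y ≠ x j)
    (v : V) : v = y ∨ ∃ j, v = x j := by
  haveI : NeZero m := ⟨by omega⟩
  have hynotin : y ∉ Finset.univ.image x := by
    intro hmem
    obtain ⟨j, _, hj⟩ := Finset.mem_image.1 hmem
    exact hy j hj.symm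
  have huniv : insert y (Finset.univ.image x) = Finset.univ := by
    apply Finset.eq_univ_of_card
    rw [Finset.card_insert_of_notMem hynotin, Finset.card_image_of_injective _ hinj,
      Finset.card_univ, ZMod.card, hc]
  have hv : v ∈ insert y (Finset.univ.image x) := huniv ▸ Finset.mem_univ v
  rcases Finset.mem_insert.1 hv with h | h
  · exact Or.inl h
  · obtain ⟨j, _, rfl⟩ := Finset.mem_image.1 h
    exact Or.inr ⟨j, rfl⟩

private lemma surj_of_inj {m : ℕ} [NeZero m] (τ : ℕ → ZMod m)
    (hτ : ∀ s, s < m → ∀ t, t < m → τ s = τ t → s = t) (j : ZMod m) :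
    ∃ t, t < m ∧ τ t = j := by
  have himg : (Finset.range m).image τ = Finset.univ := by
    apply Finset.eq_univ_of_card
    rw [Finset.card_image_of_injOn, Finset.card_range, ZMod.card]
    intro s hs t ht h
    exact hτ s (Finset.mem_range.1 hs) t (Finset.mem_range.1 ht) h
  have : j ∈ (Finset.range m).image τ := himg ▸ Finset.mem_univ j
  obtain ⟨t, ht, h⟩ := Finset.mem_image.1 this
  exact ⟨t, Finset.mem_range.1 ht, h⟩

/-- Generic bypass construction: `y` at the front. -/
private lemma hb_front {m : ℕ} (hm : 1 ≤ m) (hc : Fintype.card V = m + 1)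
    (x : ZMod m → V) (hinj : Function.Injective x) (y : V) (hy : ∀ j, y ≠ x j)
    (τ : ℕ → ZMod m) (hτ : ∀ s, s < m → ∀ t, t < m → τ s = τ t → s = t)
    (h0 : A y (x (τ 0))) (hch : ∀ t, t + 1 < m → A (x (τ t)) (x (τ (t + 1))))
    (hlast : A y (x (τ (m - 1)))) : HamBypass A := by
  haveI : NeZero m := ⟨by omega⟩
  obtain ⟨k, rfl⟩ : ∃ k, m = k + 1 := ⟨m - 1, by omega⟩
  set g : ℕ → V := fun t => x (τ t) with hg
  set L : List V := (List.range (k + 1)).map g with hL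
  have hLhead : L = g 0 :: (List.range k).map (g ∘ Nat.succ) := by
    rw [hL, List.range_succ_eq_map, List.map_cons, List.map_map]
  have hLlast : L = ((List.range k).map g) ++ [g k] := by
    rw [hL, List.range_succ, List.map_append, List.map_cons, List.map_nil]
  refine ⟨y :: L, ?_, ?_, ?_, y, g k, rfl, ?_, ?_⟩
  · rw [List.nodup_cons]
    constructor
    · intro hmem
      obtain ⟨t, _, ht⟩ := List.mem_map.1 hmem
      exact hy _ ht.symm
    · refine List.Nodup.map_on ?_ List.nodup_range
      intro s hs t ht h
      exact hτ s (List.mem_range.1 hs) t (List.mem_range.1 ht) (hinj h)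
  · intro v
    rcases cover_all (by omega) hc x hinj y hy v with rfl | ⟨j, rfl⟩
    · exact List.mem_cons_self
    · obtain ⟨t, ht, rfl⟩ := surj_of_inj τ hτ j
      exact List.mem_cons_of_mem _ (List.mem_map.2 ⟨t, List.mem_range.2 ht, rfl⟩)
  · show List.IsChain A (y :: L)
    rw [List.isChain_cons]
    constructor
    · intro b hb
      rw [hLhead] at hb
      simp only [List.head?_cons, Option.mem_def, Option.some.injEq] at hb
      rw [← hb]
      exact h0
    · rw [hL, List.isChain_map, List.isChain_range_succ]
      intro t ht
      exact hch t (by omega)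
  · show (y :: L).getLast? = some (g k)
    rw [hLlast, ← List.cons_append, List.getLast?_concat]
  · have : k + 1 - 1 = k := by omega
    rw [this] at hlast
    exact hlast

/-- Generic bypass construction: `y` at the back. -/
private lemma hb_back {m : ℕ} (hm : 1 ≤ m) (hc : Fintype.card V = m + 1)
    (x : ZMod m → V) (hinj : Function.Injective x) (y : V) (hy : ∀ j, y ≠ x j)
    (τ : ℕ → ZMod m) (hτ : ∀ s, s < m → ∀ t, t < m → τ s = τ t → s = t)
    (h0 : A (x (τ 0)) y) (hch : ∀ t, t + 1 < m → A (x (τ t)) (x (τ (t + 1))))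
    (hend : A (x (τ (m - 1))) y) : HamBypass A := by
  haveI : NeZero m := ⟨by omega⟩
  obtain ⟨k, rfl⟩ : ∃ k, m = k + 1 := ⟨m - 1, by omega⟩
  set g : ℕ → V := fun t => x (τ t) with hg
  set L : List V := (List.range (k + 1)).map g with hL
  have hLhead : L = g 0 :: (List.range k).map (g ∘ Nat.succ) := by
    rw [hL, List.range_succ_eq_map, List.map_cons, List.map_map]
  have hLlast : L = ((List.range k).map g) ++ [g k] := by
    rw [hL, List.range_succ, List.map_append, List.map_cons, List.map_nil]
  have hk : k + 1 - 1 = k := by omega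
  rw [hk] at hend
  refine ⟨L ++ [y], ?_, ?_, ?_, g 0, y, ?_, ?_, h0⟩
  · rw [List.nodup_append]
    refine ⟨?_, List.nodup_singleton _, ?_⟩
    · refine List.Nodup.map_on ?_ List.nodup_range
      intro s hs t ht h
      exact hτ s (List.mem_range.1 hs) t (List.mem_range.1 ht) (hinj h)
    · intro a ha b hb hab
      rw [List.mem_singleton] at hb
      rw [hb] at hab
      subst hab
      obtain ⟨t, _, ht⟩ := List.mem_map.1 ha
      exact hy _ ht.symm
  · intro v
    rcases cover_all (by omega) hc x hinj y hy v with rfl | ⟨j, rfl⟩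
    · exact List.mem_append_right _ (List.mem_singleton_self _)
    · obtain ⟨t, ht, rfl⟩ := surj_of_inj τ hτ j
      exact List.mem_append_left _ (List.mem_map.2 ⟨t, List.mem_range.2 ht, rfl⟩)
  · show List.IsChain A (L ++ [y])
    rw [List.isChain_append]
    refine ⟨?_, List.isChain_singleton _, ?_⟩
    · rw [hL, List.isChain_map, List.isChain_range_succ]
      intro t ht
      exact hch t (by omega)
    · intro a ha b hb
      rw [hLlast, List.getLast?_concat, Option.mem_def, Option.some.injEq] at ha
      simp only [List.head?_cons, Option.mem_def, Option.some.injEq] at hb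
      rw [← ha, ← hb]
      exact hend
  · rw [hLhead, List.cons_append]
    rfl
  · rw [List.getLast?_concat]

end Helpers

theorem stmt9 [Fintype V] [DecidableEq V] (A : V → V → Prop) [DecidableRel A]
    (hloop : Irreflexive A)
    (n : ℕ) (hcard : Fintype.card V = n) (hn : 6 ≤ n)
    (hout : ∀ v : V, 2 ≤ outDeg A v) (hin : ∀ v : V, 2 ≤ inDeg A v)
    (hstar : CondStar A)
    (x : ZMod (n - 1) → V) (hinj : Function.Injective x)
    (hcyc : ∀ i : ZMod (n - 1), A (x i) (x (i + 1)))
    (y : V) (hy : ∀ i : ZMod (n - 1), y ≠ x i)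
    (i : ZMod (n - 1)) (h1 : A (x i) y) (h2 : A y (x i)) :
    HamBypass A := by
  haveI : NeZero (n - 1) := ⟨by omega⟩
  have hm5 : 5 ≤ n - 1 := by omega
  have hc' : Fintype.card V = (n - 1) + 1 := by omega
  have hcastm1 : ((n - 1 - 1 : ℕ) : ZMod (n - 1)) = -1 := by
    rw [Nat.cast_sub (by omega : 1 ≤ n - 1), ZMod.natCast_self, Nat.cast_one, zero_sub]
  by_cases hcase1 : ∃ j : ZMod (n - 1), A y (x j) ∧ A y (x (j - 1))
  · obtain ⟨j, hj1, hj2⟩ := hcase1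
    apply hb_front (by omega) hc' x hinj y hy (fun t => j + (t : ℕ))
    · intro s hs t ht h
      exact castinj hs ht (add_left_cancel h)
    · simpa using hj1
    · intro t ht
      have he : j + ((t + 1 : ℕ) : ZMod (n - 1)) = (j + (t : ℕ)) + 1 := by push_cast; ring
      rw [he]
      exact hcyc _
    · have he : j + ((n - 1 - 1 : ℕ) : ZMod (n - 1)) = j - 1 := by rw [hcastm1]; ring
      rw [he]
      exact hj2
  by_cases hcase2 : ∃ j : ZMod (n - 1), A (x j) y ∧ A (x (j + 1)) y
  · obtain ⟨j, hj1, hj2⟩ := hcase2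
    apply hb_back (by omega) hc' x hinj y hy (fun t => j + 1 + (t : ℕ))
    · intro s hs t ht h
      exact castinj hs ht (add_left_cancel h)
    · simpa using hj2
    · intro t ht
      have he : j + 1 + ((t + 1 : ℕ) : ZMod (n - 1)) = (j + 1 + (t : ℕ)) + 1 := by push_cast; ring
      rw [he]
      exact hcyc _
    · have he : j + 1 + ((n - 1 - 1 : ℕ) : ZMod (n - 1)) = j := by rw [hcastm1]; ring
      rw [he]
      exact hj1
  push_neg at hcase1 hcase2
  -- y is non-adjacent to x (i+1)
  have hnadj1 : ¬ A y (x (i + 1)) := fun h =>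
    hcase1 (i + 1) h (by rwa [add_sub_cancel_right])
  have hnadj2 : ¬ A (x (i + 1)) y := fun h => hcase2 i h1 h
  -- out- and in-neighbourhoods of y on the cycle
  set Out : Finset (ZMod (n - 1)) := Finset.univ.filter (fun j => A y (x j)) with hOutdef
  set Inn : Finset (ZMod (n - 1)) := Finset.univ.filter (fun j => A (x j) y) with hInndef
  have houty : outDeg A y = Out.card := by
    have himg : Out.image x = Finset.univ.filter (fun u => A y u) := by
      ext u
      simp only [hOutdef, Finset.mem_image, Finset.mem_filter, Finset.mem_univ, true_and]
      constructor
      · rintro ⟨j, hj, rfl⟩; exact hj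
      · intro hu
        rcases cover_all (by omega : 1 ≤ n - 1) hc' x hinj y hy u with rfl | ⟨j, rfl⟩
        · exact absurd hu (hloop _)
        · exact ⟨j, hu, rfl⟩
    rw [outDeg, ← himg, Finset.card_image_of_injective _ hinj]
  have hiny : inDeg A y = Inn.card := by
    have himg : Inn.image x = Finset.univ.filter (fun u => A u y) := by
      ext u
      simp only [hInndef, Finset.mem_image, Finset.mem_filter, Finset.mem_univ, true_and]
      constructor
      · rintro ⟨j, hj, rfl⟩; exact hj
      · intro hu
        rcases cover_all (by omega : 1 ≤ n - 1) hc' x hinj y hy u with rfl | ⟨j, rfl⟩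
        · exact absurd hu (hloop _)
        · exact ⟨j, hu, rfl⟩
    rw [inDeg, ← himg, Finset.card_image_of_injective _ hinj]
  have hdegy : deg A y = Out.card + Inn.card := by rw [deg, houty, hiny]
  -- condition (*) applied to y and x (i+1)
  obtain ⟨hmin, hsum⟩ := hstar y (x (i + 1)) (hy _)
    (by rintro (h | h); exacts [hnadj1 h, hnadj2 h]) ⟨x i, h1, hcyc i⟩
  rw [hcard] at hmin hsum
  have hdy_ge : n - 1 ≤ deg A y := le_trans hmin (min_le_left _ _)
  -- no two consecutive out-neighbours / in-neighbours
  have hOutdisj : Disjoint Out (Out.image (· + 1)) := by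
    rw [Finset.disjoint_left]
    intro k hk hk2
    obtain ⟨j, hj, hjk⟩ := Finset.mem_image.1 hk2
    have hkA : A y (x k) := by
      have := hk; rw [hOutdef, Finset.mem_filter] at this; exact this.2
    have hjA : A y (x j) := by
      have := hj; rw [hOutdef, Finset.mem_filter] at this; exact this.2
    exact hcase1 k hkA (by rw [← hjk, add_sub_cancel_right]; exact hjA)
  have hInndisj : Disjoint Inn (Inn.image (· + 1)) := by
    rw [Finset.disjoint_left]
    intro k hk hk2
    obtain ⟨j, hj, hjk⟩ := Finset.mem_image.1 hk2
    have hkA : A (x k) y := by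
      have := hk; rw [hInndef, Finset.mem_filter] at this; exact this.2
    have hjA : A (x j) y := by
      have := hj; rw [hInndef, Finset.mem_filter] at this; exact this.2
    exact hcase2 j hjA (by rw [hjk]; exact hkA)
  have hOut2card : 2 * Out.card ≤ n - 1 := by
    have hle := Finset.card_le_card (Finset.subset_univ (Out ∪ Out.image (· + 1)))
    rw [Finset.card_union_of_disjoint hOutdisj,
      Finset.card_image_of_injective _ (add_left_injective 1), Finset.card_univ,
      ZMod.card] at hle
    omega
  have hInn2card : 2 * Inn.card ≤ n - 1 := by
    have hle := Finset.card_le_card (Finset.subset_univ (Inn ∪ Inn.image (· + 1)))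
    rw [Finset.card_union_of_disjoint hInndisj,
      Finset.card_image_of_injective _ (add_left_injective 1), Finset.card_univ,
      ZMod.card] at hle
    omega
  have hdy_le : deg A y ≤ n - 1 := by omega
  -- the vertex x (i+2) is an out-neighbour of y
  have hOutuniv : Out ∪ Out.image (· + 1) = Finset.univ := by
    apply Finset.eq_univ_of_card
    rw [Finset.card_union_of_disjoint hOutdisj,
      Finset.card_image_of_injective _ (add_left_injective 1), ZMod.card]
    omega
  have hOut2 : A y (x (i + 2)) := by
    have hmem : (i + 2) ∈ Out ∪ Out.image (· + 1) := hOutuniv ▸ Finset.mem_univ _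
    rcases Finset.mem_union.1 hmem with h | h
    · rw [hOutdef, Finset.mem_filter] at h; exact h.2
    · obtain ⟨j, hj, hjk⟩ := Finset.mem_image.1 h
      have hji : j = i + 1 := by
        have : j + 1 = (i + 1) + 1 := by rw [hjk]; ring
        exact add_right_cancel this
      rw [hji, hOutdef, Finset.mem_filter] at hj
      exact absurd hj.2 hnadj1
  -- degree of o := i + 1 within the cycle
  set o : ZMod (n - 1) := i + 1 with hodef
  set S : Finset (ZMod (n - 1)) := Finset.univ.filter (fun w => A (x o) (x w)) with hSdef
  set T : Finset (ZMod (n - 1)) := Finset.univ.filter (fun w => A (x w) (x o)) with hTdef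
  have houto : outDeg A (x o) = S.card := by
    have himg : S.image x = Finset.univ.filter (fun u => A (x o) u) := by
      ext u
      simp only [hSdef, Finset.mem_image, Finset.mem_filter, Finset.mem_univ, true_and]
      constructor
      · rintro ⟨j, hj, rfl⟩; exact hj
      · intro hu
        rcases cover_all (by omega : 1 ≤ n - 1) hc' x hinj y hy u with rfl | ⟨j, rfl⟩
        · exact absurd hu hnadj2
        · exact ⟨j, hu, rfl⟩
    rw [outDeg, ← himg, Finset.card_image_of_injective _ hinj]
  have hino : inDeg A (x o) = T.card := by
    have himg : T.image x = Finset.univ.filter (fun u => A u (x o)) := by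
      ext u
      simp only [hTdef, Finset.mem_image, Finset.mem_filter, Finset.mem_univ, true_and]
      constructor
      · rintro ⟨j, hj, rfl⟩; exact hj
      · intro hu
        rcases cover_all (by omega : 1 ≤ n - 1) hc' x hinj y hy u with rfl | ⟨j, rfl⟩
        · exact absurd hu hnadj1
        · exact ⟨j, hu, rfl⟩
    rw [inDeg, ← himg, Finset.card_image_of_injective _ hinj]
  have hST : n ≤ S.card + T.card := by
    have hdego : deg A (x o) = S.card + T.card := by rw [deg, houto, hino]
    omega
  -- the key counting argument
  have hmain : ∃ v, A (x o) (x v) ∧ v ≠ o + 1 ∧ A (x (v - 1)) (x o) := by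
    by_contra hno
    push_neg at hno
    set S' : Finset (ZMod (n - 1)) := (S.erase (o + 1)).image (fun w => w - 1) with hS'def
    have hS'card : S'.card = (S.erase (o + 1)).card :=
      Finset.card_image_of_injective _ sub_left_injective
    have hdisj : Disjoint S' (insert o T) := by
      rw [Finset.disjoint_left]
      intro w hw hw2
      rw [hS'def] at hw
      obtain ⟨v, hv, rfl⟩ := Finset.mem_image.1 hw
      have hvS : A (x o) (x v) := by
        have := Finset.mem_of_mem_erase hv
        rw [hSdef, Finset.mem_filter] at this
        exact this.2
      have hvne : v ≠ o + 1 := Finset.ne_of_mem_erase hv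
      rcases Finset.mem_insert.1 hw2 with h | h
      · exact hvne (by rw [sub_eq_iff_eq_add.1 h, add_comm])
      · rw [hTdef, Finset.mem_filter] at h
        exact hno v hvS hvne h.2
    have hunion : S'.card + (insert o T).card ≤ n - 1 := by
      have hle := Finset.card_le_card (Finset.subset_univ (S' ∪ insert o T))
      rw [Finset.card_union_of_disjoint hdisj, Finset.card_univ, ZMod.card] at hle
      exact hle
    have hoT : o ∉ T := by
      intro h
      rw [hTdef, Finset.mem_filter] at h
      exact hloop _ h.2
    have hins : (insert o T).card = T.card + 1 := Finset.card_insert_of_notMem hoT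
    have hsub : S ⊆ insert (o + 1) (S.erase (o + 1)) := by
      intro w hw
      by_cases hwo : w = o + 1
      · exact hwo ▸ Finset.mem_insert_self _ _
      · exact Finset.mem_insert_of_mem (Finset.mem_erase.2 ⟨hwo, hw⟩)
    have hScard : S.card ≤ (S.erase (o + 1)).card + 1 :=
      le_trans (Finset.card_le_card hsub) (Finset.card_insert_le _ _)
    omega
  obtain ⟨v, hα, hvne1, hβ⟩ := hmain
  have hvneo : v ≠ o := by rintro rfl; exact hloop _ hα
  -- distance from o to v
  set d1 : ℕ := (v - o).val with hd1def
  have hd1lt : d1 < n - 1 := ZMod.val_lt _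
  have hcastd1 : (d1 : ZMod (n - 1)) = v - o := by rw [hd1def, ZMod.natCast_val, ZMod.cast_id]
  have hd1ne0 : d1 ≠ 0 := by
    intro h
    apply hvneo
    have hz : v - o = 0 := by
      have := hcastd1
      rw [h, Nat.cast_zero] at this
      exact this.symm
    rwa [sub_eq_zero] at hz
  have hd1ne1 : d1 ≠ 1 := by
    intro h
    apply hvne1
    have : (1 : ZMod (n - 1)) = v - o := by rw [← hcastd1, h, Nat.cast_one]
    rw [sub_eq_iff_eq_add.1 this.symm, add_comm]
  have hd1ge2 : 2 ≤ d1 := by omega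
  -- the bypass
  set σ : ℕ → ℕ := fun t => if t < d1 - 1 then t + 1 else if t = d1 - 1 then 0 else t
    with hσdef
  have hσlt : ∀ t, t < n - 1 → σ t < n - 1 := by
    intro t ht
    simp only [hσdef]
    split_ifs <;> omega
  have hσinj : ∀ s, s < n - 1 → ∀ t, t < n - 1 → σ s = σ t → s = t := by
    intro s hs t ht h
    simp only [hσdef] at h
    split_ifs at h <;> omega
  apply hb_front (A := A) (by omega : 1 ≤ n - 1) hc' x hinj y hy (fun t => o + ((σ t : ℕ) : ZMod (n - 1)))
  · intro s hs t ht h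
    have hcast : ((σ s : ℕ) : ZMod (n - 1)) = ((σ t : ℕ) : ZMod (n - 1)) := add_left_cancel h
    exact hσinj s hs t ht (castinj (hσlt s hs) (hσlt t ht) hcast)
  · have hσ0 : σ 0 = 1 := by simp only [hσdef]; rw [if_pos (by omega)]
    rw [hσ0]
    have he : o + ((1 : ℕ) : ZMod (n - 1)) = i + 2 := by rw [hodef]; push_cast; ring
    rw [he]
    exact hOut2
  · intro t ht
    by_cases hA : t + 1 < d1 - 1
    · have e1 : σ t = t + 1 := by simp only [hσdef]; rw [if_pos (by omega)]
      have e2 : σ (t + 1) = t + 1 + 1 := by simp only [hσdef]; rw [if_pos hA]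
      rw [e1, e2]
      have he : o + ((t + 1 + 1 : ℕ) : ZMod (n - 1)) = (o + ((t + 1 : ℕ) : ZMod (n - 1))) + 1 := by
        push_cast; ring
      rw [he]
      exact hcyc _
    by_cases hB : t + 1 = d1 - 1
    · have e1 : σ t = d1 - 1 := by simp only [hσdef]; rw [if_pos (by omega)]; omega
      have e2 : σ (t + 1) = 0 := by simp only [hσdef]; rw [if_neg (by omega), if_pos hB]
      rw [e1, e2]
      have he1 : o + ((d1 - 1 : ℕ) : ZMod (n - 1)) = v - 1 := by
        rw [Nat.cast_sub (by omega : 1 ≤ d1), hcastd1, Nat.cast_one]; ring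
      have he2 : o + ((0 : ℕ) : ZMod (n - 1)) = o := by push_cast; ring
      rw [he1, he2]
      exact hβ
    by_cases hC : t = d1 - 1
    · have e1 : σ t = 0 := by simp only [hσdef]; rw [if_neg (by omega), if_pos hC]
      have e2 : σ (t + 1) = t + 1 := by
        simp only [hσdef]; rw [if_neg (by omega), if_neg (by omega)]
      rw [e1, e2]
      have he1 : o + ((0 : ℕ) : ZMod (n - 1)) = o := by push_cast; ring
      have he2 : o + ((t + 1 : ℕ) : ZMod (n - 1)) = v := by
        have hte : t + 1 = d1 := by omega
        rw [hte, hcastd1]; ring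
      rw [he1, he2]
      exact hα
    · have e1 : σ t = t := by simp only [hσdef]; rw [if_neg (by omega), if_neg hC]
      have e2 : σ (t + 1) = t + 1 := by
        simp only [hσdef]; rw [if_neg (by omega), if_neg (by omega)]
      rw [e1, e2]
      have he : o + ((t + 1 : ℕ) : ZMod (n - 1)) = (o + ((t : ℕ) : ZMod (n - 1))) + 1 := by
        push_cast; ring
      rw [he]
      exact hcyc _
  · have eσ : σ (n - 1 - 1) = n - 1 - 1 := by
      simp only [hσdef]; rw [if_neg (by omega), if_neg (by omega)]
    rw [eσ]
    have he : o + ((n - 1 - 1 : ℕ) : ZMod (n - 1)) = i := by rw [hcastm1, hodef]; ring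
    rw [he]
    exact h2
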